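/- arXiv:1807.05419 — 3 statements merged into one kernel-verified Lean document; each statement's English description precedes it below -/
import Mathlib

section
/- In the Schelling model on a finite simple graph, if the coloring y is obtained from the coloring x by flipping the color of a single vertex i (y_i = −x_i and y_j = x_j for j ≠ i), then L(y) − L(x) = 2·(u_i(y) − u_i(x)). In particular, L is (up to the factor 2) an exact potential for single-vertex color changes. -/
open Classical Filter Finset

noncomputable section

namespace Schelling

variable {V : Type*} [Fintype V] [DecidableEq V]

/-- A coloring assigns `+1` or `-1` to each vertex. -/
def IsColoring (x : V → ℤ) : Prop := ∀ v, x v = 1 ∨ x v = -1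

/-- `wdeg G x i` : number of neighbors of `i` with the same color minus
the number of neighbors with the opposite color. -/
def wdeg (G : SimpleGraph V) (x : V → ℤ) (i : V) : ℤ :=
  ((univ.filter fun j => G.Adj i j ∧ x j = x i).card : ℤ)
    - ((univ.filter fun j => G.Adj i j ∧ x j ≠ x i).card : ℤ)

/-- Utility of agent `i`. -/
def util (G : SimpleGraph V) (r : ℝ) (εc : V → ℝ) (x : V → ℤ) (i : V) : ℝ :=
  r * (wdeg G x i : ℝ) + εc i

/-- The potential `L`. -/
def potential (G : SimpleGraph V) (r : ℝ) (εc : V → ℝ) (x : V → ℤ) : ℝ :=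
  ∑ i, util G r εc x i

/-- Number of bichromatic edges. -/
def bichromCount (G : SimpleGraph V) (x : V → ℤ) : ℕ :=
  (G.edgeFinset.filter fun e =>
    Sym2.lift ⟨fun u v => x u ≠ x v, fun u v => by simp [ne_comm]⟩ e).card

/-- Number of monochromatic edges. -/
def monoCount (G : SimpleGraph V) (x : V → ℤ) : ℕ :=
  (G.edgeFinset.filter fun e =>
    Sym2.lift ⟨fun u v => x u = x v, fun u v => by simp [eq_comm]⟩ e).card

/-- Number of vertices colored `+1`. -/
def plusCount (x : V → ℤ) : ℕ := (univ.filter fun v => x v = 1).card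

/-- A coloring is maximally segregated if it minimizes the number of bichromatic
edges among all colorings with the same number of `+1` vertices. -/
def MaximallySegregated (G : SimpleGraph V) (x : V → ℤ) : Prop :=
  ∀ x' : V → ℤ, IsColoring x' → plusCount x' = plusCount x →
    bichromCount G x ≤ bichromCount G x'

/-- Exchange the values of a coloring at `i` and `j`. -/
def swap (x : V → ℤ) (i j : V) : V → ℤ :=
  fun v => if v = i then x j else if v = j then x i else x v

/-- The resistance of activating pair `e' = (i,j)` in state `x` with outcome `x'`. -/
def resist (G : SimpleGraph V) (r : ℝ) (εc : V → ℝ)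
    (x : V → ℤ) (e' : V × V) (x' : V → ℤ) : ℝ :=
  let y := swap x e'.1 e'.2
  let a := util G r εc x e'.1 + util G r εc x e'.2
  let b := util G r εc y e'.1 + util G r εc y e'.2
  if x' = x then max 0 (b - a) else max 0 (a - b)

/-- The `N × N` torus. -/
def torus (N : ℕ) : SimpleGraph (ZMod N × ZMod N) where
  Adj u v := u ≠ v ∧
    ((u.1 = v.1 ∧ (u.2 = v.2 + 1 ∨ v.2 = u.2 + 1)) ∨
     (u.2 = v.2 ∧ (u.1 = v.1 + 1 ∨ v.1 = u.1 + 1)))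
  symm := by
    constructor
    rintro u v ⟨hne, h⟩
    refine ⟨hne.symm, ?_⟩
    rcases h with ⟨h1, h2⟩ | ⟨h1, h2⟩
    · exact Or.inl ⟨h1.symm, h2.symm⟩
    · exact Or.inr ⟨h1.symm, h2.symm⟩
  loopless := ⟨fun v h => h.1 rfl⟩

/-- Markovian contagion scheduler. -/
def IsScheduler {W : Type*} [Fintype W] (D : (W × W) → (W × W) → ℝ) : Prop :=
  (∀ e e', 0 ≤ D e e') ∧ (∀ e, ∑ e', D e e' = 1) ∧ (∀ e, 0 < D e e) ∧
  (∀ e e', 0 < D e e' ↔ 0 < D e' e) ∧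
  (∀ e e', Relation.ReflTransGen (fun a b => 0 < D a b) e e')

/-- One step transition probability of the chain `M_β`. -/
def kernel (G : SimpleGraph V) (r : ℝ) (εc : V → ℝ)
    (D : (V × V) → (V × V) → ℝ) (β : ℝ) :
    ((V → ℤ) × (V × V)) → ((V → ℤ) × (V × V)) → ℝ :=
  fun s t =>
    let x := s.1; let x' := t.1; let e' := t.2
    let y := swap x e'.1 e'.2
    let a := util G r εc x e'.1 + util G r εc x e'.2
    let b := util G r εc y e'.1 + util G r εc y e'.2
    D s.2 e' *
      ((if x' = y then Real.exp (β * b) / (Real.exp (β * a) + Real.exp (β * b)) else 0)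
       + (if x' = x then Real.exp (β * a) / (Real.exp (β * a) + Real.exp (β * b)) else 0))

/-- The finite set of all ±1 colorings of `V`. -/
def colorings (V : Type*) [Fintype V] [DecidableEq V] : Finset (V → ℤ) :=
  Fintype.piFinset fun _ => ({1, -1} : Finset ℤ)

/-- The set `Ω_k` of states whose coloring has exactly `k` vertices colored `+1`. -/
def Omega (V : Type*) [Fintype V] [DecidableEq V] (k : ℕ) :
    Finset ((V → ℤ) × (V × V)) :=
  ((colorings V).filter fun x => plusCount x = k) ×ˢ (univ : Finset (V × V))

/-- `n`-step transition probabilities of a kernel restricted to a finite set `S` of states. -/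
def kerpow {S : Type*} [DecidableEq S] (K : S → S → ℝ) (A : Finset S) : ℕ → S → S → ℝ
  | 0 => fun s t => if s = t then 1 else 0
  | n + 1 => fun s t => ∑ u ∈ A, kerpow K A n s u * K u t

/-- An admissible transition of the segregation chain. -/
def Adm (D : (V × V) → (V × V) → ℝ)
    (s t : (V → ℤ) × (V × V)) : Prop :=
  0 < D s.2 t.2 ∧ (t.1 = s.1 ∨ t.1 = swap s.1 t.2.1 t.2.2)

/-- Resistance of a transition between states of the chain. -/
def tres (G : SimpleGraph V) (r : ℝ) (εc : V → ℝ)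
    (s t : (V → ℤ) × (V × V)) : ℝ :=
  resist G r εc s.1 t.2 t.1

/-- `pathOK T a z l` : `l` is the list of successive vertices of a directed path
from `a` to `z` using transitions from `T`. -/
def pathOK {S : Type*} (T : Set (S × S)) (a z : S) : List S → Prop
  | [] => a = z
  | b :: l => (a, b) ∈ T ∧ pathOK T b z l

/-- `T` is a tree (within the state set `A`) rooted at `z`. -/
def IsTreeRootedAt {S : Type*} (Adm : S → S → Prop) (A : Finset S)
    (T : Finset (S × S)) (z : S) : Prop :=
  (∀ p ∈ T, p.1 ∈ A ∧ p.2 ∈ A ∧ Adm p.1 p.2) ∧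
  (∀ w ∈ A, w ≠ z → ∃! l : List S, pathOK (↑T : Set (S × S)) w z l)

/-- Resistance of a set of transitions. -/
def treeRes {S : Type*} (ρ : S → S → ℝ) (T : Finset (S × S)) : ℝ :=
  ∑ p ∈ T, ρ p.1 p.2

lemma wdeg_sum {V : Type*} [Fintype V] [DecidableEq V]
    (G : SimpleGraph V) (x : V → ℤ) (i : V) :
    wdeg G x i = ∑ j, (if G.Adj i j then (if x j = x i then (1:ℤ) else -1) else 0) := by
  have h : ∀ j : V, (if G.Adj i j then (if x j = x i then (1:ℤ) else -1) else 0)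
      = (if G.Adj i j ∧ x j = x i then (1:ℤ) else 0)
        + (if G.Adj i j ∧ x j ≠ x i then (-1:ℤ) else 0) := by
    intro j
    by_cases h1 : G.Adj i j <;> by_cases h2 : x j = x i <;> simp [h1, h2]
  simp only [h, Finset.sum_add_distrib, ← Finset.sum_filter, Finset.sum_const,
    nsmul_eq_mul, mul_one, mul_neg_one, wdeg]
  ring

/-- If the coloring `y` is obtained from `x` by flipping the color of a
single vertex `i`, then `L(y) − L(x) = 2·(u_i(y) − u_i(x))` : `L` is (up to the factor 2)
an exact potential for single-vertex color changes. -/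
theorem potential_diff_single_flip
    {V : Type*} [Fintype V] [DecidableEq V]
    (G : SimpleGraph V) (r : ℝ) (hr : 0 < r) (εc : V → ℝ)
    (x y : V → ℤ) (hx : IsColoring x) (i : V)
    (hyi : y i = - x i) (hyj : ∀ j : V, j ≠ i → y j = x j) :
    potential G r εc y - potential G r εc x = 2 * (util G r εc y i - util G r εc x i) := by
  classical
  set F : (V → ℤ) → V → V → ℤ :=
    fun z v j => if G.Adj v j then (if z j = z v then 1 else -1) else 0 with hF
  have hFsymm : ∀ z v j, F z v j = F z j v := by
    intro z v j
    simp only [hF]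
    rw [G.adj_comm]
    by_cases h : G.Adj j v <;> simp [h, eq_comm]
  have hFeq : ∀ v j, v ≠ i → j ≠ i → F y v j = F x v j := by
    intro v j hv hj
    simp [hF, hyj v hv, hyj j hj]
  have hdiag : F y i i - F x i i = 0 := by
    simp [hF, G.irrefl]
  set D : V → ℤ := fun v => ∑ j, (F y v j - F x v j) with hD
  have hDi : D i = wdeg G y i - wdeg G x i := by
    rw [hD]
    simp only [wdeg_sum, ← Finset.sum_sub_distrib]
    rfl
  have hDoff : ∀ v, v ≠ i → D v = F y v i - F x v i := by
    intro v hv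
    rw [hD]
    refine Finset.sum_eq_single i (fun j _ hj => by rw [hFeq v j hv hj]; ring)
      (fun h => absurd (Finset.mem_univ i) h)
  have key : ∑ v, D v = 2 * (wdeg G y i - wdeg G x i) := by
    rw [← Finset.add_sum_erase univ D (Finset.mem_univ i)]
    have h1 : ∑ v ∈ univ.erase i, D v = ∑ v ∈ univ.erase i, (F y i v - F x i v) := by
      refine Finset.sum_congr rfl fun v hv => ?_
      rw [hDoff v (Finset.ne_of_mem_erase hv), hFsymm, hFsymm x]
    have h2 : ∑ v ∈ univ.erase i, (F y i v - F x i v) = D i := by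
      simp only [hD]
      rw [← Finset.add_sum_erase univ (fun v => F y i v - F x i v) (Finset.mem_univ i),
        hdiag, zero_add]
    rw [h1, h2, hDi]; ring
  have keyR : (∑ v, (wdeg G y v : ℝ)) - ∑ v, (wdeg G x v : ℝ)
      = 2 * ((wdeg G y i : ℝ) - (wdeg G x i : ℝ)) := by
    have : (∑ v, wdeg G y v) - ∑ v, wdeg G x v = 2 * (wdeg G y i - wdeg G x i) := by
      rw [← key, hD]
      simp only [Finset.sum_sub_distrib]
      have hw : ∀ z : V → ℤ, ∑ v, wdeg G z v = ∑ v, ∑ j, F z v j := by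
        intro z; exact Finset.sum_congr rfl fun v _ => wdeg_sum G z v
      rw [hw, hw]
    exact_mod_cast this
  have hpot : ∀ z : V → ℤ, potential G r εc z = r * (∑ v, (wdeg G z v : ℝ)) + ∑ v, εc v := by
    intro z
    simp only [potential, util, Finset.sum_add_distrib, Finset.mul_sum]
  rw [hpot, hpot]
  simp only [util]
  nlinarith [keyR]

end Schelling
end
end

section
/- In the Schelling model on a finite simple graph, let i ≠ j be two vertices (adjacent or not) and let y be the coloring obtained from x by exchanging the values x_i and x_j. Then L(y) − L(x) = 2·[(u_i(y) + u_j(y)) − (u_i(x) + u_j(x))]: the change in potential under a swap equals twice the change in the summed utilities of the two swapped agents. -/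
open Classical Filter Finset

noncomputable section

namespace Schelling

variable {V : Type*} [Fintype V] [DecidableEq V]

private lemma sum_split_two {V : Type*} [Fintype V] [DecidableEq V]
    {i j : V} (hij : i ≠ j) (g : V → ℤ) :
    ∑ u, g u = g i + g j + ∑ u ∈ univ \ {i, j}, g u := by
  have huniv : (univ : Finset V) = insert i (insert j (univ \ {i, j})) := by
    ext u
    simp only [Finset.mem_insert, Finset.mem_sdiff, Finset.mem_univ, true_and,
      Finset.mem_insert, Finset.mem_singleton]
    tauto
  have h1 : i ∉ insert j (univ \ {i, j}) := by
    simp only [Finset.mem_insert, Finset.mem_sdiff, Finset.mem_univ, true_and,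
      Finset.mem_insert, Finset.mem_singleton]
    tauto
  have h2 : j ∉ univ \ ({i, j} : Finset V) := by simp
  conv_lhs => rw [huniv]
  rw [Finset.sum_insert h1, Finset.sum_insert h2, add_assoc]

private lemma wdeg_prod {V : Type*} [Fintype V] [DecidableEq V]
    (G : SimpleGraph V) (x : V → ℤ) (hx : IsColoring x) (i : V) :
    wdeg G x i = ∑ v, if G.Adj i v then x i * x v else 0 := by
  classical
  rw [Finset.sum_ite, Finset.sum_const_zero, add_zero]
  have hcongr : ∑ v ∈ univ.filter fun v => G.Adj i v, x i * x v
      = ∑ v ∈ univ.filter fun v => G.Adj i v, (if x v = x i then (1 : ℤ) else -1) := by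
    refine Finset.sum_congr rfl fun v _ => ?_
    rcases hx i with hi | hi <;> rcases hx v with hv | hv <;> simp [hi, hv]
  rw [hcongr, Finset.sum_ite, Finset.sum_const, Finset.sum_const, Finset.filter_filter,
    Finset.filter_filter]
  unfold wdeg
  simp [sub_eq_add_neg]

private lemma double_sum_trick {V : Type*} [Fintype V] [DecidableEq V]
    {i j : V} (hij : i ≠ j) (f : V → V → ℤ)
    (hsymm : ∀ u v, f u v = f v u)
    (hzero : ∀ u v, u ≠ i → u ≠ j → v ≠ i → v ≠ j → f u v = 0)
    (hii : f i i = 0) (hjj : f j j = 0) (hij' : f i j = 0) :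
    ∑ u, ∑ v, f u v = 2 * (∑ v, f i v + ∑ v, f j v) := by
  have hji : f j i = 0 := by rw [hsymm]; exact hij'
  have hrow : ∀ u, u ≠ i → u ≠ j → ∑ v, f u v = f u i + f u j := by
    intro u hui huj
    rw [sum_split_two hij (g := fun v => f u v)]
    have : ∑ v ∈ univ \ {i, j}, f u v = 0 := by
      refine Finset.sum_eq_zero fun v hv => ?_
      simp only [Finset.mem_sdiff, Finset.mem_univ, true_and, Finset.mem_insert,
        Finset.mem_singleton] at hv
      exact hzero u v hui huj (fun h => hv (Or.inl h)) (fun h => hv (Or.inr h))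
    rw [this, add_zero]
  rw [sum_split_two hij (g := fun u => ∑ v, f u v)]
  have hrest : ∑ u ∈ univ \ {i, j}, ∑ v, f u v
      = (∑ v, f i v - f i i - f i j) + (∑ v, f j v - f j i - f j j) := by
    have h1 : ∑ u ∈ univ \ {i, j}, ∑ v, f u v = ∑ u ∈ univ \ {i, j}, (f i u + f j u) := by
      refine Finset.sum_congr rfl fun u hu => ?_
      simp only [Finset.mem_sdiff, Finset.mem_univ, true_and, Finset.mem_insert,
        Finset.mem_singleton] at hu
      rw [hrow u (fun h => hu (Or.inl h)) (fun h => hu (Or.inr h)),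
        hsymm u i, hsymm u j]
    rw [h1, Finset.sum_add_distrib]
    have h2 : ∑ u ∈ univ \ {i, j}, f i u = ∑ v, f i v - f i i - f i j := by
      rw [sum_split_two hij (g := fun v => f i v)]; ring
    have h3 : ∑ u ∈ univ \ {i, j}, f j u = ∑ v, f j v - f j i - f j j := by
      rw [sum_split_two hij (g := fun v => f j v)]; ring
    rw [h2, h3]
  rw [hrest, hii, hjj, hij', hji]
  ring

/-- If `y` is obtained from `x` by exchanging the values `x_i` and `x_j`
(`i ≠ j`, adjacent or not), then `L(y) − L(x) = 2·[(u_i(y)+u_j(y)) − (u_i(x)+u_j(x))]` :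
the change in potential under a swap is twice the change in the swapped agents' summed
utilities. -/
theorem potential_diff_swap
    {V : Type*} [Fintype V] [DecidableEq V]
    (G : SimpleGraph V) (r : ℝ) (hr : 0 < r) (εc : V → ℝ)
    (x : V → ℤ) (hx : IsColoring x) (i j : V) (hij : i ≠ j) :
    potential G r εc (swap x i j) - potential G r εc x =
      2 * ((util G r εc (swap x i j) i + util G r εc (swap x i j) j)
            - (util G r εc x i + util G r εc x j)) := by
  set y := swap x i j with hy
  have hyi : y i = x j := by simp [hy, swap]
  have hyj : y j = x i := by simp [hy, swap, hij.symm]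
  have hyv : ∀ v, v ≠ i → v ≠ j → y v = x v := by
    intro v h1 h2; simp [hy, swap, h1, h2]
  have hycol : IsColoring y := by
    intro v
    by_cases h1 : v = i
    · rw [h1, hyi]; exact hx j
    by_cases h2 : v = j
    · rw [h2, hyj]; exact hx i
    · rw [hyv v h1 h2]; exact hx v
  -- the key integer identity
  set f : V → V → ℤ := fun u v => if G.Adj u v then y u * y v - x u * x v else 0 with hf
  have hfsymm : ∀ u v, f u v = f v u := by
    intro u v
    simp only [hf]
    rw [G.adj_comm]
    by_cases h : G.Adj v u <;> simp [h, mul_comm]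
  have hfzero : ∀ u v, u ≠ i → u ≠ j → v ≠ i → v ≠ j → f u v = 0 := by
    intro u v h1 h2 h3 h4
    simp [hf, hyv u h1 h2, hyv v h3 h4]
  have hfii : f i i = 0 := by simp [hf]
  have hfjj : f j j = 0 := by simp [hf]
  have hfij : f i j = 0 := by simp [hf, hyi, hyj, mul_comm]
  have hrowdiff : ∀ u, wdeg G y u - wdeg G x u = ∑ v, f u v := by
    intro u
    rw [wdeg_prod G y hycol u, wdeg_prod G x hx u, ← Finset.sum_sub_distrib]
    refine Finset.sum_congr rfl fun v _ => ?_
    by_cases h : G.Adj u v <;> simp [hf, h]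
  have key : (∑ u, wdeg G y u) - (∑ u, wdeg G x u)
      = 2 * ((wdeg G y i + wdeg G y j) - (wdeg G x i + wdeg G x j)) := by
    have h1 : (∑ u, wdeg G y u) - (∑ u, wdeg G x u) = ∑ u, ∑ v, f u v := by
      rw [← Finset.sum_sub_distrib]
      exact Finset.sum_congr rfl fun u _ => hrowdiff u
    rw [h1, double_sum_trick hij f hfsymm hfzero hfii hfjj hfij,
      ← hrowdiff i, ← hrowdiff j]
    ring
  -- now conclude over ℝ
  have hpot : ∀ z : V → ℤ, potential G r εc z
      = r * ((∑ u, wdeg G z u : ℤ) : ℝ) + ∑ u, εc u := by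
    intro z
    unfold potential util
    rw [Finset.sum_add_distrib, ← Finset.mul_sum]
    push_cast
    ring
  unfold util
  rw [hpot y, hpot x]
  have := key
  have hcast : ((∑ u, wdeg G y u : ℤ) : ℝ) - ((∑ u, wdeg G x u : ℤ) : ℝ)
      = 2 * (((wdeg G y i : ℤ) : ℝ) + (wdeg G y j : ℤ)
          - ((wdeg G x i : ℤ) + (wdeg G x j : ℤ))) := by
    exact_mod_cast congrArg (fun n : ℤ => (n : ℝ)) key
  nlinarith [hcast]

end Schelling
end
end

section
/- For every β > 0 and every 0 ≤ k ≤ N², the Markov chain M_β of Schelling's segregation model with Markovian contagion, restricted to the set Ω_k of states (x,e) in which the coloring x has exactly k vertices colored +1, is irreducible and aperiodic: any state in Ω_k can reach any other state in Ω_k with positive probability in finitely many steps, and every state has a positive-probability self-loop at some power of the chain making the period 1. -/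
open Classical Filter Finset

noncomputable section

namespace Schelling

variable {V : Type*} [Fintype V] [DecidableEq V]

/-! ### Auxiliary lemmas -/

lemma swap_eq_comp (x : V → ℤ) (i j : V) : swap x i j = x ∘ (Equiv.swap i j) := by
  funext v
  simp only [swap, Function.comp_apply, Equiv.swap_apply_def]
  split_ifs <;> simp_all

lemma plusCount_swap (x : V → ℤ) (i j : V) : plusCount (swap x i j) = plusCount x := by
  rw [swap_eq_comp]
  unfold plusCount
  apply Finset.card_equiv (Equiv.swap i j)
  intro v
  simp

lemma mem_colorings_iff (x : V → ℤ) : x ∈ colorings V ↔ ∀ v, x v = 1 ∨ x v = -1 := by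
  simp [colorings, Fintype.mem_piFinset]

lemma swap_mem_colorings {x : V → ℤ} (hx : x ∈ colorings V) (i j : V) :
    swap x i j ∈ colorings V := by
  rw [mem_colorings_iff] at hx ⊢
  rw [swap_eq_comp]
  intro v
  exact hx _

lemma kernel_nonneg (G : SimpleGraph V) (r : ℝ) (εc : V → ℝ)
    (D : (V × V) → (V × V) → ℝ) (β : ℝ)
    (hD : ∀ e e', 0 ≤ D e e') (s t : (V → ℤ) × (V × V)) :
    0 ≤ kernel G r εc D β s t := by
  unfold kernel
  apply mul_nonneg (hD _ _)
  apply add_nonneg <;> · split_ifs <;> positivity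

lemma kernel_pos_stay (G : SimpleGraph V) (r : ℝ) (εc : V → ℝ)
    (D : (V × V) → (V × V) → ℝ) (β : ℝ)
    (s : (V → ℤ) × (V × V)) (e' : V × V) (h : 0 < D s.2 e') :
    0 < kernel G r εc D β s (s.1, e') := by
  unfold kernel
  apply mul_pos h
  rw [if_pos rfl]
  apply add_pos_of_nonneg_of_pos
  · split_ifs <;> positivity
  · positivity

lemma kernel_pos_swap (G : SimpleGraph V) (r : ℝ) (εc : V → ℝ)
    (D : (V × V) → (V × V) → ℝ) (β : ℝ)
    (s : (V → ℤ) × (V × V)) (e' : V × V) (h : 0 < D s.2 e') :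
    0 < kernel G r εc D β s (swap s.1 e'.1 e'.2, e') := by
  unfold kernel
  apply mul_pos h
  rw [if_pos rfl]
  apply add_pos_of_pos_of_nonneg
  · positivity
  · split_ifs <;> positivity

lemma kerpow_nonneg {S : Type*} [DecidableEq S] {K : S → S → ℝ} {A : Finset S}
    (hK : ∀ s t, 0 ≤ K s t) : ∀ n s t, 0 ≤ kerpow K A n s t
  | 0, s, t => by unfold kerpow; split_ifs <;> norm_num
  | n + 1, s, t => by
      unfold kerpow
      exact Finset.sum_nonneg fun u _ => mul_nonneg (kerpow_nonneg hK n s u) (hK u t)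

lemma kerpow_pos_succ {S : Type*} [DecidableEq S] {K : S → S → ℝ} {A : Finset S}
    (hK : ∀ s t, 0 ≤ K s t) {n : ℕ} {s u t : S}
    (h1 : 0 < kerpow K A n s u) (hu : u ∈ A) (h2 : 0 < K u t) :
    0 < kerpow K A (n + 1) s t := by
  show 0 < ∑ w ∈ A, kerpow K A n s w * K w t
  exact Finset.sum_pos'
    (fun w _ => mul_nonneg (kerpow_nonneg hK n s w) (hK w t))
    ⟨u, hu, mul_pos h1 h2⟩

lemma rtg_kerpow {S : Type*} [DecidableEq S] {K : S → S → ℝ} {A : Finset S}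
    (hK : ∀ s t, 0 ≤ K s t) {s t : S} (hs : s ∈ A)
    (h : Relation.ReflTransGen (fun a b => b ∈ A ∧ 0 < K a b) s t) :
    (∃ n, 0 < kerpow K A n s t) ∧ t ∈ A := by
  induction h with
  | refl => exact ⟨⟨0, by simp [kerpow]⟩, hs⟩
  | tail _ hbc ih =>
      obtain ⟨⟨n, hn⟩, hb⟩ := ih
      exact ⟨⟨n + 1, kerpow_pos_succ hK hn hb hbc.2⟩, hbc.1⟩

lemma reach_sched {G : SimpleGraph V} {r : ℝ} {εc : V → ℝ}
    {D : (V × V) → (V × V) → ℝ} {β : ℝ} {k : ℕ} {x : V → ℤ}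
    (hx : x ∈ (colorings V).filter fun z => plusCount z = k)
    {e e' : V × V} (h : Relation.ReflTransGen (fun a b => 0 < D a b) e e') :
    Relation.ReflTransGen
      (fun s t => t ∈ Omega V k ∧ 0 < kernel G r εc D β s t) (x, e) (x, e') := by
  induction h with
  | refl => exact .refl
  | @tail b c _ hbc ih =>
      exact ih.tail ⟨Finset.mem_product.2 ⟨hx, Finset.mem_univ _⟩,
        kernel_pos_stay G r εc D β (x, b) c hbc⟩

lemma reach_swap {G : SimpleGraph V} {r : ℝ} {εc : V → ℝ}
    {D : (V × V) → (V × V) → ℝ} {β : ℝ} {k : ℕ} {x : V → ℤ}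
    (hD : IsScheduler D)
    (hx : x ∈ (colorings V).filter fun z => plusCount z = k)
    (i j : V) (e : V × V) :
    Relation.ReflTransGen
      (fun s t => t ∈ Omega V k ∧ 0 < kernel G r εc D β s t)
      (x, e) (swap x i j, (i, j)) := by
  obtain ⟨hxc, hxk⟩ := Finset.mem_filter.1 hx
  refine (reach_sched hx (hD.2.2.2.2 e (i, j))).tail
    ⟨Finset.mem_product.2 ⟨Finset.mem_filter.2
      ⟨swap_mem_colorings hxc i j, by rw [plusCount_swap]; exact hxk⟩,
      Finset.mem_univ _⟩, ?_⟩
  exact kernel_pos_swap G r εc D β (x, (i, j)) (i, j) (hD.2.2.1 (i, j))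

lemma exists_discordant {x x' : V → ℤ} (hx : ∀ v, x v = 1 ∨ x v = -1)
    (hx' : ∀ v, x' v = 1 ∨ x' v = -1) (hpc : plusCount x = plusCount x')
    (hne : x ≠ x') :
    ∃ i j, x i = 1 ∧ x' i = -1 ∧ x j = -1 ∧ x' j = 1 := by
  classical
  set A := univ.filter fun v => x v = 1 ∧ x' v = -1 with hA
  set B := univ.filter fun v => x v = -1 ∧ x' v = 1 with hB
  set P := univ.filter fun v => x v = 1 ∧ x' v = 1 with hP
  have h1 : plusCount x = P.card + A.card := by
    unfold plusCount
    rw [← Finset.card_union_of_disjoint]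
    · congr 1
      ext v
      simp only [hP, hA, Finset.mem_filter, Finset.mem_union, Finset.mem_univ, true_and]
      rcases hx' v with h' | h' <;> simp [h']
    · rw [Finset.disjoint_left]
      intro v hv hv'
      simp only [hP, hA, Finset.mem_filter] at hv hv'
      have := hv.2.2.symm.trans hv'.2.2
      norm_num at this
  have h2 : plusCount x' = P.card + B.card := by
    unfold plusCount
    rw [← Finset.card_union_of_disjoint]
    · congr 1
      ext v
      simp only [hP, hB, Finset.mem_filter, Finset.mem_union, Finset.mem_univ, true_and]
      rcases hx v with h' | h' <;> simp [h'] <;> tauto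
    · rw [Finset.disjoint_left]
      intro v hv hv'
      simp only [hP, hB, Finset.mem_filter] at hv hv'
      have := hv.2.1.symm.trans hv'.2.1
      norm_num at this
  have hcard : A.card = B.card := by omega
  obtain ⟨v, hv⟩ := Function.ne_iff.mp hne
  have hvAB : v ∈ A ∨ v ∈ B := by
    rcases hx v with h | h <;> rcases hx' v with h' | h'
    · exact absurd (h.trans h'.symm) hv
    · exact Or.inl (by simp [hA, h, h'])
    · exact Or.inr (by simp [hB, h, h'])
    · exact absurd (h.trans h'.symm) hv
  have hAne : A.Nonempty ∧ B.Nonempty := by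
    rcases hvAB with h | h
    · have hA1 : 0 < A.card := Finset.card_pos.2 ⟨v, h⟩
      exact ⟨⟨v, h⟩, Finset.card_pos.1 (hcard ▸ hA1)⟩
    · have hB1 : 0 < B.card := Finset.card_pos.2 ⟨v, h⟩
      exact ⟨Finset.card_pos.1 (hcard.symm ▸ hB1), ⟨v, h⟩⟩
  obtain ⟨⟨i, hi⟩, ⟨j, hj⟩⟩ := hAne
  simp only [hA, hB, Finset.mem_filter, Finset.mem_univ, true_and] at hi hj
  exact ⟨i, j, hi.1, hi.2, hj.1, hj.2⟩

lemma reach_col (G : SimpleGraph V) (r : ℝ) (εc : V → ℝ)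
    (D : (V × V) → (V × V) → ℝ) (β : ℝ) (k : ℕ) (hD : IsScheduler D) :
    ∀ n (x x' : V → ℤ), x ∈ colorings V → x' ∈ colorings V →
      plusCount x = k → plusCount x' = k →
      (univ.filter fun v => x v ≠ x' v).card ≤ n → ∀ e e',
      Relation.ReflTransGen
        (fun s t => t ∈ Omega V k ∧ 0 < kernel G r εc D β s t) (x, e) (x', e') := by
  intro n
  induction n with
  | zero =>
      intro x x' hx hx' hpx hpx' hcard e e'
      have hxx : x = x' := by
        funext v
        by_contra hv
        have hv' : v ∈ univ.filter fun v => x v ≠ x' v := by simp [hv]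
        have := Finset.card_pos.2 ⟨v, hv'⟩
        omega
      subst hxx
      exact reach_sched (Finset.mem_filter.2 ⟨hx, hpx⟩) (hD.2.2.2.2 e e')
  | succ n ih =>
      intro x x' hx hx' hpx hpx' hcard e e'
      by_cases hxx : x = x'
      · subst hxx
        exact reach_sched (Finset.mem_filter.2 ⟨hx, hpx⟩) (hD.2.2.2.2 e e')
      · obtain ⟨i, j, hi1, hi2, hj1, hj2⟩ :=
          exists_discordant ((mem_colorings_iff x).mp hx) ((mem_colorings_iff x').mp hx')
            (hpx.trans hpx'.symm) hxx
        have step1 := reach_swap (G := G) (r := r) (εc := εc) (β := β) hD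
          (Finset.mem_filter.2 ⟨hx, hpx⟩) i j e
        have hiMem : i ∈ univ.filter fun v => x v ≠ x' v := by
          simp only [Finset.mem_filter, Finset.mem_univ, true_and, hi1, hi2]
          norm_num
        have hsub : (univ.filter fun v => swap x i j v ≠ x' v)
            ⊆ (univ.filter fun v => x v ≠ x' v).erase i := by
          intro v hv
          simp only [Finset.mem_filter, Finset.mem_univ, true_and] at hv
          rw [Finset.mem_erase]
          have hvi : v ≠ i := by
            rintro rfl
            apply hv
            simp [swap, hj1, hi2]
          have hvj : v ≠ j := by
            rintro rfl
            apply hv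
            simp only [swap]
            split_ifs <;> simp_all
          refine ⟨hvi, ?_⟩
          simp only [Finset.mem_filter, Finset.mem_univ, true_and]
          simpa [swap, hvi, hvj] using hv
        have key : (univ.filter fun v => swap x i j v ≠ x' v).card ≤ n := by
          have h1 := Finset.card_le_card hsub
          rw [Finset.card_erase_of_mem hiMem] at h1
          omega
        exact step1.trans (ih (swap x i j) x' (swap_mem_colorings hx i j) hx'
          (by rw [plusCount_swap]; exact hpx) hpx' key (i, j) e')

/-- For every `β > 0` and `0 ≤ k ≤ N²`, the chain `M_β` restricted to
`Ω_k` is irreducible (any state of `Ω_k` reaches any other with positive probability in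
finitely many steps) and aperiodic (for every state, all sufficiently large powers of the
chain have a positive-probability return, i.e. the period is 1). -/
theorem restricted_chain_irreducible_aperiodic
    (N : ℕ) [NeZero N] (hN : 2 ≤ N) (r : ℝ) (hr : 0 < r)
    (εc : ZMod N × ZMod N → ℝ)
    (D : ((ZMod N × ZMod N) × (ZMod N × ZMod N)) →
         ((ZMod N × ZMod N) × (ZMod N × ZMod N)) → ℝ)
    (hD : IsScheduler D)
    (β : ℝ) (hβ : 0 < β) (k : ℕ) (hk : k ≤ N ^ 2) :
    (∀ s ∈ Omega (ZMod N × ZMod N) k, ∀ t ∈ Omega (ZMod N × ZMod N) k,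
      ∃ n : ℕ, 0 < n ∧
        0 < kerpow (kernel (torus N) r εc D β) (Omega (ZMod N × ZMod N) k) n s t) ∧
    (∀ s ∈ Omega (ZMod N × ZMod N) k,
      ∃ m : ℕ, ∀ n ≥ m,
        0 < kerpow (kernel (torus N) r εc D β) (Omega (ZMod N × ZMod N) k) n s s) := by
  have hKnn : ∀ s t, 0 ≤ kernel (torus N) r εc D β s t :=
    kernel_nonneg (torus N) r εc D β hD.1
  constructor
  · intro s hs t ht
    obtain ⟨hs1, -⟩ := Finset.mem_product.1 hs
    obtain ⟨ht1, -⟩ := Finset.mem_product.1 ht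
    obtain ⟨hsc, hsk⟩ := Finset.mem_filter.1 hs1
    obtain ⟨htc, htk⟩ := Finset.mem_filter.1 ht1
    have hreach := reach_col (torus N) r εc D β k hD
      ((univ.filter fun v => s.1 v ≠ t.1 v).card) s.1 t.1 hsc htc hsk htk le_rfl s.2 t.2
    obtain ⟨⟨n, hn⟩, -⟩ := rtg_kerpow hKnn hs hreach
    refine ⟨n + 1, Nat.succ_pos n, kerpow_pos_succ hKnn hn ht ?_⟩
    exact kernel_pos_stay (torus N) r εc D β t t.2 (hD.2.2.1 t.2)
  · intro s hs
    have hself : 0 < kernel (torus N) r εc D β s s :=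
      kernel_pos_stay (torus N) r εc D β s s.2 (hD.2.2.1 s.2)
    have hpow : ∀ m : ℕ,
        0 < kerpow (kernel (torus N) r εc D β) (Omega (ZMod N × ZMod N) k) (m + 1) s s := by
      intro m
      induction m with
      | zero => exact kerpow_pos_succ hKnn (by simp [kerpow]) hs hself
      | succ m ih => exact kerpow_pos_succ hKnn ih hs hself
    refine ⟨1, fun n hn => ?_⟩
    obtain ⟨m, rfl⟩ : ∃ m, n = m + 1 := ⟨n - 1, by omega⟩
    exact hpow m

end Schelling
end
end
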